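/- Let μ > 1, a := (μ+1)/(μ−1), δ := (√μ − 1)/(√μ + 1), η := −δ, and for m ≥ 1 let Q_m be the polynomial of best uniform approximation to 1/(t+a) on [−1,1] by polynomials of degree at most m, given by Q_m(t) := −2/(η − η⁻¹) + (4/(η − η⁻¹)) Σ_{j=0}^{m−1} ηʲ T_j(t) − (4 η^{m−1}/(η − η⁻¹)²) T_m(t). If ((√μ − 1)/(√μ + 1))ᵐ < 2/(μ − 1), then (t + a)·Q_m(t) > 0 for all t ∈ [−1, 1]. -/

import Mathlib

open Polynomial Polynomial.Chebyshev

private lemma cos_rec (θ : ℝ) (x : ℝ) :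
    Real.cos ((x + 2) * θ) = 2 * Real.cos θ * Real.cos ((x + 1) * θ) - Real.cos (x * θ) := by
  have h1 := Real.cos_add ((x + 1) * θ) θ
  have h2 := Real.cos_sub ((x + 1) * θ) θ
  have e1 : (x + 1) * θ + θ = (x + 2) * θ := by ring
  have e2 : (x + 1) * θ - θ = x * θ := by ring
  rw [e1] at h1
  rw [e2] at h2
  linarith

private lemma key_identity (δ θ : ℝ) : ∀ n : ℕ,
    (2 * δ * Real.cos θ + 1 + δ ^ 2) *
        (-2 * δ * (1 - δ ^ 2) +
          4 * δ * (1 - δ ^ 2) * (∑ j ∈ Finset.range (n + 1), (-δ) ^ j * Real.cos ((j : ℝ) * θ)) -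
          4 * δ ^ 2 * (-δ) ^ n * Real.cos (((n : ℝ) + 1) * θ)) =
      2 * δ * (1 - δ ^ 2) ^ 2 +
        (-δ) ^ n * (4 * δ ^ 3 * (1 - δ ^ 2) * Real.cos ((n : ℝ) * θ) -
          8 * δ ^ 3 * (Real.cos θ + δ) * Real.cos (((n : ℝ) + 1) * θ)) := by
  intro n
  induction n with
  | zero =>
      simp only [Finset.sum_range_one, pow_zero, Nat.cast_zero, zero_mul, Real.cos_zero,
        one_mul, zero_add]
      ring
  | succ n ih =>
      rw [Finset.sum_range_succ]
      have hrec := cos_rec θ (n : ℝ)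
      have e : ((n : ℝ) + 2) * θ = ((n : ℝ) + 1 + 1) * θ := by ring
      rw [e] at hrec
      push_cast
      push_cast at ih
      linear_combination ih + 4 * δ ^ 3 * (-δ) ^ n * (1 - δ ^ 2) * hrec

private lemma aux_pos (K E : ℝ) (hK : 0 < K) (hE : E ^ 2 < K ^ 2) : 0 < K + E := by
  nlinarith [sq_nonneg (K + E)]

theorem smoother_positivity_condition (μ : ℝ) (hμ : 1 < μ)
    (a δ η : ℝ) (ha : a = (μ + 1) / (μ - 1))
    (hδ : δ = (Real.sqrt μ - 1) / (Real.sqrt μ + 1)) (hη : η = -δ)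
    (m : ℕ) (hm : 1 ≤ m)
    (Qm : Polynomial ℝ)
    (hQm : Qm = C (-2 / (η - η⁻¹)) +
        C (4 / (η - η⁻¹)) * ∑ j ∈ Finset.range m, C (η ^ j) * T ℝ j -
        C (4 * η ^ (m - 1) / (η - η⁻¹) ^ 2) * T ℝ m)
    (hcond : ((Real.sqrt μ - 1) / (Real.sqrt μ + 1)) ^ m < 2 / (μ - 1)) :
    ∀ t ∈ Set.Icc (-1 : ℝ) 1, 0 < (t + a) * Qm.eval t := by
  intro t ht
  obtain ⟨ht1, ht2⟩ := ht
  -- basic facts about r = sqrt μ and δ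
  set r := Real.sqrt μ with hr
  have hμ0 : (0:ℝ) ≤ μ := by linarith
  have hr2 : r ^ 2 = μ := Real.sq_sqrt hμ0
  have hr1 : 1 < r := by
    nlinarith [Real.sqrt_nonneg μ, hr2]
  have hrp1 : r + 1 ≠ 0 := by linarith
  have hrm1 : r - 1 ≠ 0 := by intro h; nlinarith
  have hμ1 : (0:ℝ) < μ - 1 := by linarith
  have hμ1' : μ - 1 ≠ 0 := ne_of_gt hμ1
  have hr21 : r ^ 2 - 1 ≠ 0 := by nlinarith
  have hδ0 : 0 < δ := by
    rw [hδ]; exact div_pos (by linarith) (by linarith)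
  have hδ1 : δ < 1 := by
    rw [hδ]; rw [div_lt_one (by linarith)]; linarith
  have hδne : δ ≠ 0 := ne_of_gt hδ0
  have h1δ2 : (0:ℝ) < 1 - δ ^ 2 := by nlinarith
  have h1δ2ne : (1:ℝ) - δ ^ 2 ≠ 0 := ne_of_gt h1δ2
  -- a in terms of δ
  have ha2 : a = (1 + δ ^ 2) / (2 * δ) := by
    rw [ha, hδ, ← hr2]
    field_simp
    ring
  -- the condition in terms of δ
  obtain ⟨n, rfl⟩ : ∃ n, m = n + 1 := ⟨m - 1, (Nat.succ_pred_eq_of_pos hm).symm⟩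
  rw [← hδ] at hcond
  have hc2 : δ ^ (n + 1) * (μ - 1) < 2 := (lt_div_iff₀ hμ1).mp hcond
  have hid : (1 - δ) ^ 2 * (μ - 1) = 4 * δ := by
    rw [hδ, ← hr2]; field_simp; ring
  have hδn : (0:ℝ) < δ ^ n := pow_pos hδ0 n
  have h2 : 2 * (δ ^ n * δ ^ 2) < (1 - δ) ^ 2 := by
    have h2' : 2 * (δ ^ n * δ ^ 2) * (μ - 1) < (1 - δ) ^ 2 * (μ - 1) := by
      rw [hid]
      have hint := mul_lt_mul_of_pos_left hc2 (by positivity : (0:ℝ) < 2 * δ)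
      have hmono : 2 * δ * (δ ^ (n + 1) * (μ - 1)) = 2 * (δ ^ n * δ ^ 2) * (μ - 1) := by ring
      linarith
    exact (mul_lt_mul_iff_of_pos_right hμ1).mp h2'
  -- set up θ
  obtain ⟨θ, hct⟩ : ∃ θ : ℝ, Real.cos θ = t := ⟨Real.arccos t, Real.cos_arccos ht1 ht2⟩
  -- evaluate Qm
  subst hη
  subst hQm
  rw [← hct]
  rw [show n + 1 - 1 = n from rfl]
  simp only [eval_add, eval_sub, eval_mul, eval_C, eval_finset_sum, T_real_cos]
  push_cast
  have hs : -δ - (-δ)⁻¹ = (1 - δ ^ 2) / δ := by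
    rw [inv_neg]; field_simp; ring
  rw [hs, ha2]
  have key := key_identity δ θ n
  set c := Real.cos θ with hcdef
  set S := ∑ j ∈ Finset.range (n + 1), (-δ) ^ j * Real.cos ((j : ℝ) * θ) with hSdef
  set u := Real.cos ((n : ℝ) * θ) with hudef
  set v := Real.cos (((n : ℝ) + 1) * θ) with hvdef
  clear_value c S u v
  have hc1 : -1 ≤ c := by rw [hct]; exact ht1
  have hcle : c ≤ 1 := by rw [hct]; exact ht2
  -- the product, multiplied by the positive constant 2δ(1-δ²)²
  have hmain : 2 * δ * (1 - δ ^ 2) ^ 2 *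
      ((c + (1 + δ ^ 2) / (2 * δ)) *
        (-2 / ((1 - δ ^ 2) / δ) + 4 / ((1 - δ ^ 2) / δ) * S -
          4 * (-δ) ^ n / ((1 - δ ^ 2) / δ) ^ 2 * v)) =
      2 * δ * (1 - δ ^ 2) ^ 2 +
        (-δ) ^ n * (4 * δ ^ 3 * (1 - δ ^ 2) * u - 8 * δ ^ 3 * (c + δ) * v) := by
    rw [← key]
    field_simp
    ring
  -- bound the oscillating part
  set w := Real.sin (((n : ℝ) + 1) * θ) with hwdef
  have hu_sub : u = v * c + w * Real.sin θ := by
    have h := Real.cos_sub (((n : ℝ) + 1) * θ) θ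
    have e : ((n : ℝ) + 1) * θ - θ = (n : ℝ) * θ := by ring
    rw [e] at h
    rw [hudef, hvdef, hwdef, hcdef, h]
  have hpyth : v ^ 2 + w ^ 2 = 1 := by
    rw [hvdef, hwdef]
    exact Real.cos_sq_add_sin_sq (((n : ℝ) + 1) * θ)
  have hsin2 : Real.sin θ ^ 2 = 1 - c ^ 2 := by
    rw [hcdef]; exact Real.sin_sq θ
  set sθ := Real.sin θ with hsθ
  clear_value w sθ
  -- Cauchy-Schwarz style bound: W² ≤ (4δ³(2δc+1+δ²))²
  have key2 : (4 * δ ^ 3 * (2 * δ * c + 1 + δ ^ 2)) ^ 2 -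
      (4 * δ ^ 3 * (1 - δ ^ 2) * (v * c + w * sθ) - 8 * δ ^ 3 * (c + δ) * v) ^ 2 =
      ((4 * δ ^ 3 * ((1 + δ ^ 2) * c + 2 * δ)) * w + (4 * δ ^ 3 * (1 - δ ^ 2) * sθ) * v) ^ 2 := by
    linear_combination
      (-(16 * δ ^ 6 * ((1 + δ ^ 2) * c + 2 * δ) ^ 2 + 16 * δ ^ 6 * (1 - δ ^ 2) ^ 2 * sθ ^ 2)) * hpyth
      + (-(16 * δ ^ 6 * (1 - δ ^ 2) ^ 2)) * hsin2
  have hW2 : (4 * δ ^ 3 * (1 - δ ^ 2) * u - 8 * δ ^ 3 * (c + δ) * v) ^ 2 ≤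
      (4 * δ ^ 3 * (2 * δ * c + 1 + δ ^ 2)) ^ 2 := by
    rw [hu_sub]
    linarith only [key2, sq_nonneg ((4 * δ ^ 3 * ((1 + δ ^ 2) * c + 2 * δ)) * w +
      (4 * δ ^ 3 * (1 - δ ^ 2) * sθ) * v)]
  have hsq : ((-δ) ^ n) ^ 2 = (δ ^ n) ^ 2 := by
    rw [← pow_mul, ← pow_mul, mul_comm n 2, pow_mul, pow_mul, neg_sq]
  have h0M : (0:ℝ) ≤ 2 * δ * c + 1 + δ ^ 2 := by
    have h := mul_le_mul_of_nonneg_left hc1 hδ0.le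
    linarith only [h, sq_nonneg (1 - δ)]
  have hMpos : (0:ℝ) ≤ 4 * δ ^ 3 * (2 * δ * c + 1 + δ ^ 2) :=
    mul_nonneg (mul_nonneg (by norm_num) (pow_nonneg hδ0.le 3)) h0M
  have hle : 2 * δ * c + 1 + δ ^ 2 ≤ (1 + δ) ^ 2 := by
    have h := mul_le_mul_of_nonneg_left hcle hδ0.le
    linarith only [h]
  have hstep1 : δ ^ n * (4 * δ ^ 3 * (2 * δ * c + 1 + δ ^ 2)) < 2 * δ * (1 - δ ^ 2) ^ 2 := by
    have e1 := mul_lt_mul_of_pos_left h2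
      (mul_pos (mul_pos two_pos hδ0) (pow_pos (by linarith : (0:ℝ) < 1 + δ) 2))
    have e2 := mul_le_mul_of_nonneg_left hle
      (mul_nonneg (by norm_num : (0:ℝ) ≤ 4) (mul_nonneg hδn.le (pow_nonneg hδ0.le 3)))
    linarith only [e1, e2]
  have hKpos : (0:ℝ) < 2 * δ * (1 - δ ^ 2) ^ 2 := by positivity
  -- conclude
  set E := (-δ) ^ n * (4 * δ ^ 3 * (1 - δ ^ 2) * u - 8 * δ ^ 3 * (c + δ) * v) with hEdef
  have hnm : (0:ℝ) ≤ δ ^ n * (4 * δ ^ 3 * (2 * δ * c + 1 + δ ^ 2)) := mul_nonneg hδn.le hMpos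
  have hE2 : E ^ 2 < (2 * δ * (1 - δ ^ 2) ^ 2) ^ 2 := by
    have h1 : E ^ 2 ≤ (δ ^ n * (4 * δ ^ 3 * (2 * δ * c + 1 + δ ^ 2))) ^ 2 := by
      rw [hEdef, mul_pow, hsq, mul_pow]
      exact mul_le_mul_of_nonneg_left hW2 (by positivity)
    exact lt_of_le_of_lt h1 (pow_lt_pow_left₀ hstep1 hnm (by norm_num))
  have hfinal : 0 < 2 * δ * (1 - δ ^ 2) ^ 2 *
      ((c + (1 + δ ^ 2) / (2 * δ)) *
        (-2 / ((1 - δ ^ 2) / δ) + 4 / ((1 - δ ^ 2) / δ) * S -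
          4 * (-δ) ^ n / ((1 - δ ^ 2) / δ) ^ 2 * v)) := by
    rw [hmain]
    exact aux_pos _ _ hKpos hE2
  rcases mul_pos_iff.mp hfinal with ⟨_, h⟩ | ⟨h, _⟩
  · exact h
  · linarith
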